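/- Let p be a positive integer and suppose ∫_S |φ|^p dπ < ∞. Then μ(φ) has a finite p-th moment and E[μ(φ)^p] = ∑_{n=1}^{p} ∑_{k_1,…,k_n ≥ 1, k_1+⋯+k_n = p} (p!/(n!·k_1!⋯k_n!)) · ν(φ^{k_1})⋯ν(φ^{k_n}). -/

import Mathlib

open MeasureTheory ProbabilityTheory

open Finset
open scoped ENNReal NNReal


lemma poisson_choose_hasSum (lam : ℝ) (n : ℕ) :
    HasSum (fun m : ℕ => Real.exp (-lam) * lam ^ m / m.factorial * m.choose n)
      (lam ^ n / n.factorial) := by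
  set f : ℕ → ℝ := fun m => Real.exp (-lam) * lam ^ m / m.factorial * m.choose n with hf
  have hinj : Function.Injective (fun j : ℕ => j + n) := add_left_injective n
  rw [← hinj.hasSum_iff (f := f)]
  · have h0 : HasSum (fun j : ℕ => lam ^ j / j.factorial) (Real.exp lam) := by
      rw [Real.exp_eq_exp_ℝ]; exact NormedSpace.expSeries_div_hasSum_exp lam
    have h1 := h0.mul_left (Real.exp (-lam) * lam ^ n / n.factorial)
    have hval : Real.exp (-lam) * lam ^ n / n.factorial * Real.exp lam
        = lam ^ n / n.factorial := by
      rw [Real.exp_neg]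
      field_simp
    rw [← hval]
    convert h1 using 2 with j
    show f (j + n) = _
    have hc : (((j + n).choose n : ℕ) : ℝ) * j.factorial * n.factorial
        = ((j + n).factorial : ℝ) := by
      exact_mod_cast congrArg (Nat.cast : ℕ → ℝ)
        (Nat.add_choose_mul_factorial_mul_factorial j n)
    have hjf : (j.factorial : ℝ) ≠ 0 := Nat.cast_ne_zero.2 j.factorial_ne_zero
    have hnf : (n.factorial : ℝ) ≠ 0 := Nat.cast_ne_zero.2 n.factorial_ne_zero
    have hjnf : ((j + n).factorial : ℝ) ≠ 0 := Nat.cast_ne_zero.2 (j + n).factorial_ne_zero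
    rw [hf]
    field_simp
    rw [pow_add]
    linear_combination lam ^ j * lam ^ n * hc
    rfl
  · intro m hm
    have : m < n := by
      by_contra h
      exact hm ⟨m - n, by simp only []; omega⟩
    simp [hf, Nat.choose_eq_zero_of_lt this]


lemma prod_eq_fin {M : Type*} [CommMonoid M] (h : ℕ → M) (h0 : h 0 = 1)
    (u s : Finset ℕ) (hsub : s ⊆ u) (k : ℕ → ℕ) (hk : ∀ i ∈ u, i ∉ s → k i = 0) :
    ∏ i ∈ u, h (k i) = ∏ a : Fin s.card, h (k (s.orderIsoOfFin rfl a)) := by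
  rw [← Finset.prod_subset hsub (fun i hi hins => by rw [hk i hi hins, h0])]
  rw [← Finset.prod_attach s (fun i => h (k i))]
  exact Fintype.prod_equiv (s.orderIsoOfFin rfl).toEquiv.symm _ _ (fun x => by simp)

lemma sum_eq_fin (u s : Finset ℕ) (hsub : s ⊆ u) (k : ℕ → ℕ)
    (hk : ∀ i ∈ u, i ∉ s → k i = 0) :
    ∑ i ∈ u, k i = ∑ a : Fin s.card, k (s.orderIsoOfFin rfl a) := by
  rw [← Finset.sum_subset hsub (fun i hi hins => by rw [hk i hi hins])]
  rw [← Finset.sum_attach s k]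
  exact Fintype.sum_equiv (s.orderIsoOfFin rfl).toEquiv.symm _ _ (fun x => by simp)

lemma lemD (c : ℕ → ℝ) (hc0 : c 0 = 1) (m p : ℕ) (hp : 0 < p) :
    ∑ k ∈ Finset.piAntidiag (range m) p,
        (Nat.multinomial (range m) k : ℝ) * ∏ i ∈ range m, c (k i)
      = ∑ n ∈ Finset.Icc 1 p, (m.choose n : ℝ) *
          ∑ t ∈ (Finset.Nat.antidiagonalTuple n p).filter (fun t => ∀ i, 1 ≤ t i),
            ((p.factorial : ℝ) / ∏ i, ((t i).factorial : ℝ)) * ∏ i, c (t i) := by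
  classical
  set G : ℕ → ℝ := fun n =>
    ∑ t ∈ (Finset.Nat.antidiagonalTuple n p).filter (fun t => ∀ i, 1 ≤ t i),
      ((p.factorial : ℝ) / ∏ i, ((t i).factorial : ℝ)) * ∏ i, c (t i) with hG
  -- Step 1: fiber over supports
  rw [← Finset.sum_fiberwise_of_maps_to
    (g := fun k : ℕ → ℕ => (range m).filter (fun i => k i ≠ 0))
    (t := (range m).powerset)
    (fun k _ => Finset.mem_powerset.2 (Finset.filter_subset _ _)) _]
  -- Step 2: each fiber
  have key : ∀ s ∈ (range m).powerset,
      (∑ k ∈ (Finset.piAntidiag (range m) p).filter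
          (fun k => (range m).filter (fun i => k i ≠ 0) = s),
        (Nat.multinomial (range m) k : ℝ) * ∏ i ∈ range m, c (k i)) = G s.card := by
    intro s hs
    have hsub : s ⊆ range m := Finset.mem_powerset.1 hs
    set e := s.orderIsoOfFin rfl with he
    refine Finset.sum_nbij' (i := fun k (a : Fin s.card) => k (e a))
      (j := fun t x => if hx : x ∈ s then t (e.symm ⟨x, hx⟩) else 0)
      ?_ ?_ ?_ ?_ ?_
    · intro k hk
      simp only [Finset.mem_filter, Finset.mem_piAntidiag] at hk
      obtain ⟨⟨hsum, hsupp⟩, hfil⟩ := hk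
      have hzero : ∀ i ∈ range m, i ∉ s → k i = 0 := by
        intro i hi his
        by_contra h
        exact his (hfil ▸ Finset.mem_filter.2 ⟨hi, h⟩)
      have hpos : ∀ i ∈ s, k i ≠ 0 := by
        intro i his
        have := hfil ▸ his
        exact (Finset.mem_filter.1 this).2
      refine Finset.mem_filter.2 ⟨Finset.Nat.mem_antidiagonalTuple.2 ?_, ?_⟩
      · rw [← sum_eq_fin (range m) s hsub k hzero, hsum]
      · intro a
        exact Nat.one_le_iff_ne_zero.2 (hpos _ (e a).2)
    · intro t ht
      simp only [Finset.mem_filter, Finset.Nat.mem_antidiagonalTuple] at ht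
      obtain ⟨hsum, hpos⟩ := ht
      have hz : ∀ i ∈ range m, i ∉ s → (if hx : i ∈ s then t (e.symm ⟨i, hx⟩) else 0) = 0 := by
        intro i _ his; rw [dif_neg his]
      refine Finset.mem_filter.2 ⟨Finset.mem_piAntidiag.2 ⟨?_, ?_⟩, ?_⟩
      · rw [sum_eq_fin (range m) s hsub _ hz, ← hsum]
        refine Fintype.sum_congr _ _ (fun a => ?_)
        show (if hx : (e a : ℕ) ∈ s then t (e.symm ⟨e a, hx⟩) else 0) = t a
        rw [dif_pos (e a).2]
        exact congrArg t (e.symm_apply_apply a)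
      · intro i hi
        by_cases his : i ∈ s
        · exact hsub his
        · exact absurd (dif_neg his) hi
      · ext i
        simp only [Finset.mem_filter]
        constructor
        · rintro ⟨hi, hne⟩
          by_contra his
          exact hne (dif_neg his)
        · intro his
          refine ⟨hsub his, ?_⟩
          rw [dif_pos his]
          exact Nat.one_le_iff_ne_zero.1 (hpos _)
    · intro k hk
      simp only [Finset.mem_filter, Finset.mem_piAntidiag] at hk
      obtain ⟨⟨hsum, hsupp⟩, hfil⟩ := hk
      funext x
      show (if hx : x ∈ s then k (e (e.symm ⟨x, hx⟩)) else 0) = k x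
      by_cases hx : x ∈ s
      · rw [dif_pos hx]
        exact congrArg k (congrArg Subtype.val (e.apply_symm_apply ⟨x, hx⟩))
      · rw [dif_neg hx]
        by_cases hxr : x ∈ range m
        · by_contra h
          exact hx (hfil ▸ Finset.mem_filter.2 ⟨hxr, fun hh => h hh.symm⟩)
        · by_contra h
          exact hxr (hsupp x (fun hh => h hh.symm))
    · intro t ht
      funext a
      show (if hx : (e a : ℕ) ∈ s then t (e.symm ⟨e a, hx⟩) else 0) = t a
      rw [dif_pos (e a).2]
      exact congrArg t (e.symm_apply_apply a)
    · intro k hk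
      simp only [Finset.mem_filter, Finset.mem_piAntidiag] at hk
      obtain ⟨⟨hsum, hsupp⟩, hfil⟩ := hk
      have hzero : ∀ i ∈ range m, i ∉ s → k i = 0 := by
        intro i hi his
        by_contra h
        exact his (hfil ▸ Finset.mem_filter.2 ⟨hi, h⟩)
      have hfact : ∏ i ∈ range m, (((k i).factorial : ℕ) : ℝ)
          = ∏ a : Fin s.card, (((k (e a)).factorial : ℕ) : ℝ) :=
        prod_eq_fin (fun j => ((j.factorial : ℕ) : ℝ)) (by simp) _ _ hsub k hzero
      have hc : ∏ i ∈ range m, c (k i) = ∏ a : Fin s.card, c (k (e a)) :=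
        prod_eq_fin c hc0 _ _ hsub k hzero
      have hspec : (∏ i ∈ range m, ((k i).factorial : ℝ)) *
          (Nat.multinomial (range m) k : ℝ) = (p.factorial : ℝ) := by
        have := Nat.multinomial_spec (range m) k
        rw [hsum] at this
        exact_mod_cast congrArg (Nat.cast : ℕ → ℝ) this
      have hne : (∏ a : Fin s.card, ((k (e a)).factorial : ℝ)) ≠ 0 := by
        refine Finset.prod_ne_zero_iff.2 (fun a _ => ?_)
        exact_mod_cast (k (e a)).factorial_ne_zero
      rw [hc, div_mul_eq_mul_div, eq_comm, div_eq_iff hne]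
      rw [hfact] at hspec
      linear_combination (-(∏ a : Fin s.card, c (k (e a)))) * hspec
  rw [Finset.sum_congr rfl key]
  -- Step 3: group by cardinality
  rw [Finset.sum_powerset]
  have hcard : ∀ j ∈ range ((range m).card + 1),
      (∑ s ∈ Finset.powersetCard j (range m), G s.card) = (m.choose j : ℝ) * G j := by
    intro j _
    rw [Finset.sum_congr rfl (fun s hs => by
      rw [(Finset.mem_powersetCard.1 hs).2]), Finset.sum_const,
      Finset.card_powersetCard, Finset.card_range, nsmul_eq_mul]
  rw [Finset.sum_congr rfl hcard, Finset.card_range]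
  -- Step 4: change index set
  have hGzero : ∀ n, n ∉ Finset.Icc 1 p → G n = 0 := by
    intro n hn
    rw [Finset.mem_Icc, not_and_or] at hn
    have hempty : (Finset.Nat.antidiagonalTuple n p).filter (fun t => ∀ i, 1 ≤ t i) = ∅ := by
      rw [Finset.eq_empty_iff_forall_notMem]
      intro t ht
      simp only [Finset.mem_filter, Finset.Nat.mem_antidiagonalTuple] at ht
      obtain ⟨hsum, hpos⟩ := ht
      rcases hn with hn | hn
      · interval_cases n
        · simp at hsum; omega
      · push_neg at hn
        have : (n : ℕ) ≤ ∑ i : Fin n, t i := by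
          calc (n : ℕ) = ∑ _i : Fin n, 1 := by simp
          _ ≤ ∑ i : Fin n, t i := Finset.sum_le_sum (fun i _ => hpos i)
        omega
    simp only [hG, hempty, Finset.sum_empty]
  have h1 : ∑ j ∈ range (m + 1), (m.choose j : ℝ) * G j
      = ∑ j ∈ range (m + 1) ∪ Finset.Icc 1 p, (m.choose j : ℝ) * G j := by
    refine Finset.sum_subset Finset.subset_union_left (fun x _ hx => ?_)
    rw [Finset.mem_range, not_lt] at hx
    rw [Nat.choose_eq_zero_of_lt (by omega)]
    simp
  have h2 : ∑ j ∈ Finset.Icc 1 p, (m.choose j : ℝ) * G j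
      = ∑ j ∈ range (m + 1) ∪ Finset.Icc 1 p, (m.choose j : ℝ) * G j := by
    refine Finset.sum_subset Finset.subset_union_right (fun x _ hx => ?_)
    rw [hGzero x hx]
    simp
  rw [h1, ← h2]


lemma integ_indep_prod {Ω : Type*} [MeasurableSpace Ω] (P : Measure Ω) [IsProbabilityMeasure P]
    (g : ℕ → Ω → ℝ)
    (hind : iIndepFun g P)
    (hmeas : ∀ i, Measurable (g i)) (hint : ∀ i, Integrable (g i) P) (s : Finset ℕ) :
    Integrable (fun ω => ∏ i ∈ s, g i ω) P ∧
      ∫ ω, ∏ i ∈ s, g i ω ∂P = ∏ i ∈ s, ∫ ω, g i ω ∂P := by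
  classical
  induction s using Finset.cons_induction with
  | empty => simp
  | cons a s ha ih =>
    have hsi : IndepFun (∏ j ∈ s, g j) (g a) P :=
      hind.indepFun_finsetProd_of_notMem hmeas ha
    have hP : Integrable (∏ j ∈ s, g j) P := by
      rw [Finset.prod_fn]; exact ih.1
    have hfun : (fun ω => ∏ i ∈ Finset.cons a s ha, g i ω) = (∏ j ∈ s, g j) * g a := by
      funext ω
      simp only [Finset.prod_cons, Pi.mul_apply, Finset.prod_apply]
      ring
    constructor
    · rw [hfun]; exact hsi.integrable_mul hP (hint a)
    · rw [hfun, hsi.integral_mul_eq_mul_integral hP.aestronglyMeasurable (hint a).aestronglyMeasurable,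
        Finset.prod_cons, ← ih.2]
      rw [Finset.prod_fn]
      ring

lemma pow_integrable {S : Type*} [MeasurableSpace S] (π : Measure S) [IsProbabilityMeasure π]
    (ψ : S → ℝ) (hψ : Measurable ψ) (p : ℕ)
    (hmom : Integrable (fun s => |ψ s| ^ p) π) (j : ℕ) (hj : j ≤ p) :
    Integrable (fun x => ψ x ^ j) π := by
  refine Integrable.mono' ((integrable_const 1).add hmom)
    ((hψ.pow_const j).aestronglyMeasurable) (ae_of_all _ fun x => ?_)
  have habs : ‖ψ x ^ j‖ = |ψ x| ^ j := by rw [Real.norm_eq_abs, abs_pow]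
  rw [habs]
  simp only [Pi.add_apply]
  rcases le_or_gt (|ψ x|) 1 with h | h
  · have h1 : |ψ x| ^ j ≤ 1 := pow_le_one₀ (abs_nonneg _) h
    have h2 : (0:ℝ) ≤ |ψ x| ^ p := pow_nonneg (abs_nonneg _) p
    linarith
  · have h1 : |ψ x| ^ j ≤ |ψ x| ^ p := pow_le_pow_right₀ h.le hj
    linarith

lemma moment_fixed {Ω S : Type*} [MeasurableSpace Ω] [MeasurableSpace S]
    (P : Measure Ω) [IsProbabilityMeasure P] (π : Measure S) [IsProbabilityMeasure π]
    (ξ : ℕ → Ω → S) (hξmeas : ∀ n, Measurable (ξ n))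
    (hlaw : ∀ n, Measure.map (ξ n) P = π)
    (hiid : iIndepFun ξ P)
    (ψ : S → ℝ) (hψ : Measurable ψ) (p : ℕ)
    (hmom : Integrable (fun s => |ψ s| ^ p) π) (m : ℕ) :
    Integrable (fun ω => (∑ i ∈ range m, ψ (ξ i ω)) ^ p) P ∧
      ∫ ω, (∑ i ∈ range m, ψ (ξ i ω)) ^ p ∂P
        = ∑ k ∈ Finset.piAntidiag (range m) p,
            (Nat.multinomial (range m) k : ℝ) *
              ∏ i ∈ range m, (∫ x, ψ x ^ (k i) ∂π) := by
  classical
  have hπint : ∀ j ≤ p, Integrable (fun x => ψ x ^ j) π :=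
    fun j hj => pow_integrable π ψ hψ p hmom j hj
  have hcomp : ∀ (j : ℕ), j ≤ p → ∀ i, Integrable (fun ω => ψ (ξ i ω) ^ j) P := by
    intro j hj i
    have h1 : Integrable (fun x => ψ x ^ j) (Measure.map (ξ i) P) := by
      rw [hlaw i]; exact hπint j hj
    exact (integrable_map_measure ((hψ.pow_const j).aestronglyMeasurable)
      (hξmeas i).aemeasurable).1 h1
  have hcompint : ∀ (j : ℕ), j ≤ p → ∀ i, ∫ ω, ψ (ξ i ω) ^ j ∂P = ∫ x, ψ x ^ j ∂π := by
    intro j hj i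
    rw [← hlaw i, integral_map (hξmeas i).aemeasurable
      ((hψ.pow_const j).aestronglyMeasurable)]
  have hexp : ∀ ω : Ω, (∑ i ∈ range m, ψ (ξ i ω)) ^ p
      = ∑ k ∈ Finset.piAntidiag (range m) p,
          (Nat.multinomial (range m) k : ℝ) * ∏ i ∈ range m, ψ (ξ i ω) ^ (k i) :=
    fun ω => Finset.sum_pow_eq_sum_piAntidiag (range m) (fun i => ψ (ξ i ω)) p
  have hterm : ∀ k ∈ Finset.piAntidiag (range m) p,
      Integrable (fun ω => ∏ i ∈ range m, ψ (ξ i ω) ^ (k i)) P ∧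
        ∫ ω, ∏ i ∈ range m, ψ (ξ i ω) ^ (k i) ∂P
          = ∏ i ∈ range m, (∫ x, ψ x ^ (k i) ∂π) := by
    intro k hk
    rw [Finset.mem_piAntidiag] at hk
    obtain ⟨hsum, hsupp⟩ := hk
    have hkle : ∀ i, k i ≤ p := by
      intro i
      by_cases hi : i ∈ range m
      · rw [← hsum]; exact Finset.single_le_sum (fun _ _ => Nat.zero_le _) hi
      · have : k i = 0 := by by_contra h; exact hi (hsupp i h)
        omega
    have hind : iIndepFun
        (fun i ω => ψ (ξ i ω) ^ (k i)) P :=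
      hiid.comp (fun i x => ψ x ^ (k i)) (fun i => hψ.pow_const _)
    have := integ_indep_prod P (fun i ω => ψ (ξ i ω) ^ (k i)) hind
      (fun i => (hψ.comp (hξmeas i)).pow_const _)
      (fun i => hcomp (k i) (hkle i) i) (range m)
    exact ⟨this.1, this.2.trans (Finset.prod_congr rfl
      (fun i _ => hcompint (k i) (hkle i) i))⟩
  constructor
  · simp_rw [hexp]
    refine integrable_finset_sum _ (fun k hk => ?_)
    exact ((hterm k hk).1).const_mul _
  · simp_rw [hexp]
    rw [integral_finset_sum _ (fun k hk => ((hterm k hk).1.const_mul _))]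
    refine Finset.sum_congr rfl (fun k hk => ?_)
    rw [integral_const_mul, (hterm k hk).2]

/-- **Moment formula for a compound Poisson sum.** If `N` is Poisson of parameter `λ`,
`(ξ_n)` are i.i.d. with law `π`, all jointly independent, `μ(φ) = ∑_{n<N} φ(ξ_n)` and
`ν = λ·π`, then for a positive integer `p` with `∫ |φ|^p dπ < ∞`, `μ(φ)` has a finite
`p`-th moment and
`E[μ(φ)^p] = ∑_{n=1}^{p} ∑_{k₁+⋯+kₙ=p, kᵢ≥1} (p!/(n! k₁!⋯kₙ!)) ν(φ^{k₁})⋯ν(φ^{kₙ})`. -/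
theorem stmt_2 {Ω : Type*} [MeasurableSpace Ω] (P : Measure Ω) [IsProbabilityMeasure P]
    {S : Type*} [MeasurableSpace S] (π : Measure S) [IsProbabilityMeasure π]
    (lam : ℝ) (hlam : 0 < lam)
    (N : Ω → ℕ) (hNmeas : Measurable N)
    (hNpois : ∀ n : ℕ,
      P {ω | N ω = n} = ENNReal.ofReal (Real.exp (-lam) * lam ^ n / n.factorial))
    (ξ : ℕ → Ω → S) (hξmeas : ∀ n, Measurable (ξ n))
    (hlaw : ∀ n, Measure.map (ξ n) P = π)
    (hiid : iIndepFun ξ P)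
    (hjoint : IndepFun N (fun ω => fun n => ξ n ω) P)
    (φ : S → ℝ) (hφ : Measurable φ)
    (p : ℕ) (hp : 0 < p)
    (hmom : Integrable (fun s => |φ s| ^ p) π) :
    Integrable (fun ω => (∑ n ∈ Finset.range (N ω), φ (ξ n ω)) ^ p) P ∧
    ∫ ω, (∑ n ∈ Finset.range (N ω), φ (ξ n ω)) ^ p ∂P =
      ∑ n ∈ Finset.Icc 1 p,
        ∑ k ∈ (Finset.Nat.antidiagonalTuple n p).filter (fun k => ∀ i, 1 ≤ k i),
          ((p.factorial : ℝ) / (n.factorial * ∏ i, (k i).factorial)) *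
            ∏ i, (lam * ∫ s, φ s ^ (k i) ∂π) := by
  classical
  set c : ℕ → ℝ := fun j => ∫ x, φ x ^ j ∂π with hc
  set c' : ℕ → ℝ := fun j => ∫ x, |φ x| ^ j ∂π with hc'
  have hc0 : c 0 = 1 := by simp [hc]
  have hc'0 : c' 0 = 1 := by simp [hc']
  set w : ℕ → ℝ := fun m => Real.exp (-lam) * lam ^ m / m.factorial with hw
  have hwnn : ∀ m, 0 ≤ w m := fun m => by
    have := hlam.le
    positivity
  -- fixed-m moments
  have hmomφ := moment_fixed P π ξ hξmeas hlaw hiid φ hφ p hmom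
  have habs : Integrable (fun s : S => |(|φ s|)| ^ p) π := by simpa [abs_abs] using hmom
  have hmomabs := moment_fixed P π ξ hξmeas hlaw hiid (fun x => |φ x|) hφ.abs p habs
  have hφint : ∀ m, Integrable (fun ω => (∑ i ∈ range m, φ (ξ i ω)) ^ p) P :=
    fun m => (hmomφ m).1
  have habsint : ∀ m, Integrable (fun ω => (∑ i ∈ range m, |φ (ξ i ω)|) ^ p) P :=
    fun m => (hmomabs m).1
  set E : ℕ → ℝ := fun m => ∫ ω, (∑ i ∈ range m, φ (ξ i ω)) ^ p ∂P with hE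
  set B : ℕ → ℝ := fun m => ∫ ω, (∑ i ∈ range m, |φ (ξ i ω)|) ^ p ∂P with hB
  set G : ℕ → ℝ := fun n =>
    ∑ t ∈ (Finset.Nat.antidiagonalTuple n p).filter (fun t => ∀ i, 1 ≤ t i),
      ((p.factorial : ℝ) / ∏ i, ((t i).factorial : ℝ)) * ∏ i, c (t i) with hG
  set G' : ℕ → ℝ := fun n =>
    ∑ t ∈ (Finset.Nat.antidiagonalTuple n p).filter (fun t => ∀ i, 1 ≤ t i),
      ((p.factorial : ℝ) / ∏ i, ((t i).factorial : ℝ)) * ∏ i, c' (t i) with hG'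
  have hEeq : ∀ m, E m = ∑ n ∈ Finset.Icc 1 p, (m.choose n : ℝ) * G n := by
    intro m
    have h2 : ∫ ω, (∑ i ∈ range m, φ (ξ i ω)) ^ p ∂P
        = ∑ k ∈ Finset.piAntidiag (range m) p,
            (Nat.multinomial (range m) k : ℝ) * ∏ i ∈ range m, c (k i) := (hmomφ m).2
    rw [hE]
    exact h2.trans (lemD c hc0 m p hp)
  have hBeq : ∀ m, B m = ∑ n ∈ Finset.Icc 1 p, (m.choose n : ℝ) * G' n := by
    intro m
    have h2 : ∫ ω, (∑ i ∈ range m, |φ (ξ i ω)|) ^ p ∂P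
        = ∑ k ∈ Finset.piAntidiag (range m) p,
            (Nat.multinomial (range m) k : ℝ) * ∏ i ∈ range m, c' (k i) := (hmomabs m).2
    rw [hB]
    exact h2.trans (lemD c' hc'0 m p hp)
  -- measurability
  have hφξ : ∀ i : ℕ, Measurable fun ω => φ (ξ i ω) := fun i => hφ.comp (hξmeas i)
  have hfm_meas : ∀ m, Measurable (fun ω => (∑ i ∈ range m, φ (ξ i ω)) ^ p) :=
    fun m => (Finset.measurable_sum _ (fun i _ => hφξ i)).pow_const p
  have hf_meas : Measurable (fun ω => (∑ n ∈ range (N ω), φ (ξ n ω)) ^ p) := by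
    have hF : Measurable (fun q : Ω × ℕ => (∑ i ∈ range q.2, φ (ξ i q.1)) ^ p) :=
      measurable_from_prod_countable_left (fun m => hfm_meas m)
    exact hF.comp (measurable_id.prodMk hNmeas)
  -- partition
  set A : ℕ → Set Ω := fun m => N ⁻¹' {m} with hA
  have hAmeas : ∀ m, MeasurableSet (A m) := fun m => hNmeas (measurableSet_singleton m)
  have hdisj : Pairwise (Function.onFun Disjoint A) := fun i j hij =>
    Set.disjoint_left.2 fun ω hi hj => hij ((hi : N ω = i).symm.trans (hj : N ω = j))
  have hunion : (⋃ m, A m) = Set.univ := by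
    ext ω; simp [hA]
  have hPA : ∀ m, P (A m) = ENNReal.ofReal (w m) := fun m => hNpois m
  have hmNE : ∀ m : ℕ, Measurable fun ω => if N ω = m then (1:ℝ≥0∞) else 0 :=
    fun m => (measurable_from_top
      (f := fun j : ℕ => if j = m then (1:ℝ≥0∞) else 0)).comp hNmeas
  have hmNR : ∀ m : ℕ, Measurable fun ω => if N ω = m then (1:ℝ) else 0 :=
    fun m => (measurable_from_top
      (f := fun j : ℕ => if j = m then (1:ℝ) else 0)).comp hNmeas
  -- independence per m
  have hindR : ∀ m : ℕ, IndepFun (fun ω => if N ω = m then (1:ℝ) else 0)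
      (fun ω => (∑ i ∈ range m, φ (ξ i ω)) ^ p) P := by
    intro m
    exact hjoint.comp (φ := fun j : ℕ => if j = m then (1:ℝ) else 0)
      (ψ := fun y : ℕ → S => (∑ i ∈ range m, φ (y i)) ^ p) measurable_from_top
      ((Finset.measurable_sum _ (fun i _ => hφ.comp (measurable_pi_apply i))).pow_const p)
  have hindE : ∀ m : ℕ, IndepFun (fun ω => if N ω = m then (1:ℝ≥0∞) else 0)
      (fun ω => ENNReal.ofReal ((∑ i ∈ range m, |φ (ξ i ω)|) ^ p)) P := by
    intro m
    exact hjoint.comp (φ := fun j : ℕ => if j = m then (1:ℝ≥0∞) else 0)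
      (ψ := fun y : ℕ → S => ENNReal.ofReal ((∑ i ∈ range m, |φ (y i)|) ^ p))
      measurable_from_top
      (((Finset.measurable_sum _ (fun i _ =>
        (hφ.comp (measurable_pi_apply i)).abs)).pow_const p).ennreal_ofReal)
  -- nonnegativity and summability
  have hBnn : ∀ m, 0 ≤ B m := fun m => integral_nonneg
    (fun ω => pow_nonneg (Finset.sum_nonneg fun i _ => abs_nonneg _) p)
  have hsumE : ∀ n, HasSum (fun m => w m * (m.choose n : ℝ)) (lam ^ n / n.factorial) :=
    fun n => poisson_choose_hasSum lam n
  have hsummable : Summable (fun m => w m * B m) := by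
    have h1 : (fun m => w m * B m)
        = fun m => ∑ n ∈ Finset.Icc 1 p, (w m * (m.choose n : ℝ)) * G' n := by
      funext m
      rw [hBeq m, Finset.mul_sum]
      exact Finset.sum_congr rfl fun n _ => by ring
    rw [h1]
    exact summable_sum (fun n _ => ((hsumE n).summable.mul_right (G' n)))
  -- lintegral bound per m
  have hlin : ∀ m : ℕ, (∫⁻ ω in A m, ‖(∑ n ∈ range (N ω), φ (ξ n ω)) ^ p‖₊ ∂P)
      ≤ ENNReal.ofReal (w m * B m) := by
    intro m
    have h1 : (∫⁻ ω in A m, ‖(∑ n ∈ range (N ω), φ (ξ n ω)) ^ p‖₊ ∂P)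
        = ∫⁻ ω in A m, ‖(∑ i ∈ range m, φ (ξ i ω)) ^ p‖₊ ∂P := by
      refine setLIntegral_congr_fun (hAmeas m) (fun ω hω => ?_)
      rw [show N ω = m from hω]
    have h2 : ∀ ω : Ω, (‖(∑ i ∈ range m, φ (ξ i ω)) ^ p‖₊ : ℝ≥0∞)
        ≤ ENNReal.ofReal ((∑ i ∈ range m, |φ (ξ i ω)|) ^ p) := by
      intro ω
      rw [← enorm_eq_nnnorm, ← ofReal_norm]
      refine ENNReal.ofReal_le_ofReal ?_
      rw [norm_pow, Real.norm_eq_abs]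
      exact pow_le_pow_left₀ (abs_nonneg _) (Finset.abs_sum_le_sum_abs _ _) p
    have h3 : (fun ω => (A m).indicator
          (fun ω => ENNReal.ofReal ((∑ i ∈ range m, |φ (ξ i ω)|) ^ p)) ω)
        = (fun ω => if N ω = m then (1:ℝ≥0∞) else 0)
          * (fun ω => ENNReal.ofReal ((∑ i ∈ range m, |φ (ξ i ω)|) ^ p)) := by
      funext ω
      by_cases hω : N ω = m
      · rw [Set.indicator_of_mem (by exact hω)]
        simp [hω]
      · rw [Set.indicator_of_notMem (by exact hω)]
        simp [hω]
    calc (∫⁻ ω in A m, ‖(∑ n ∈ range (N ω), φ (ξ n ω)) ^ p‖₊ ∂P)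
        ≤ ∫⁻ ω in A m, ENNReal.ofReal ((∑ i ∈ range m, |φ (ξ i ω)|) ^ p) ∂P := by
          rw [h1]; exact lintegral_mono fun ω => h2 ω
      _ = ∫⁻ ω, ((fun ω => if N ω = m then (1:ℝ≥0∞) else 0)
            * (fun ω => ENNReal.ofReal ((∑ i ∈ range m, |φ (ξ i ω)|) ^ p))) ω ∂P := by
          rw [← lintegral_indicator (hAmeas m), ← h3]
      _ = (∫⁻ ω, (if N ω = m then (1:ℝ≥0∞) else 0) ∂P)
            * ∫⁻ ω, ENNReal.ofReal ((∑ i ∈ range m, |φ (ξ i ω)|) ^ p) ∂P := by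
          exact lintegral_mul_eq_lintegral_mul_lintegral_of_indepFun (hmNE m)
            (((Finset.measurable_sum _ (fun i _ =>
              (hφ.comp (hξmeas i)).abs)).pow_const p).ennreal_ofReal) (hindE m)
      _ = P (A m) * ENNReal.ofReal (B m) := by
          congr 1
          · rw [← lintegral_indicator_one (hAmeas m)]
            refine lintegral_congr fun ω => ?_
            by_cases hω : N ω = m
            · rw [Set.indicator_of_mem (by exact hω)]; simp [hω]
            · rw [Set.indicator_of_notMem (by exact hω)]; simp [hω]
          · rw [← ofReal_integral_eq_lintegral_ofReal (habsint m)
              (ae_of_all _ fun ω => pow_nonneg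
                (Finset.sum_nonneg fun i _ => abs_nonneg _) p)]
      _ = ENNReal.ofReal (w m * B m) := by
          rw [hPA m, ← ENNReal.ofReal_mul (hwnn m)]
  -- integrability
  have hfint : Integrable (fun ω => (∑ n ∈ range (N ω), φ (ξ n ω)) ^ p) P := by
    refine ⟨hf_meas.aestronglyMeasurable, ?_⟩
    have hbig : (∫⁻ ω, ‖(∑ n ∈ range (N ω), φ (ξ n ω)) ^ p‖₊ ∂P)
        = ∑' m, ∫⁻ ω in A m, ‖(∑ n ∈ range (N ω), φ (ξ n ω)) ^ p‖₊ ∂P := by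
      rw [← lintegral_iUnion hAmeas hdisj, hunion, setLIntegral_univ]
    rw [HasFiniteIntegral]; simp_rw [enorm_eq_nnnorm]; rw [hbig]
    calc (∑' m, ∫⁻ ω in A m, ‖(∑ n ∈ range (N ω), φ (ξ n ω)) ^ p‖₊ ∂P)
        ≤ ∑' m, ENNReal.ofReal (w m * B m) := ENNReal.tsum_le_tsum hlin
      _ = ENNReal.ofReal (∑' m, w m * B m) := (ENNReal.ofReal_tsum_of_nonneg
          (fun m => mul_nonneg (hwnn m) (hBnn m)) hsummable).symm
      _ < ⊤ := ENNReal.ofReal_lt_top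
  refine ⟨hfint, ?_⟩
  -- integral over pieces
  have hEint : ∀ m, ∫ ω in A m, (∑ n ∈ range (N ω), φ (ξ n ω)) ^ p ∂P = w m * E m := by
    intro m
    have h1 : ∫ ω in A m, (∑ n ∈ range (N ω), φ (ξ n ω)) ^ p ∂P
        = ∫ ω in A m, (∑ i ∈ range m, φ (ξ i ω)) ^ p ∂P :=
      setIntegral_congr_fun (hAmeas m) (fun ω hω => by rw [show N ω = m from hω])
    have h2 : (A m).indicator (fun ω => (∑ i ∈ range m, φ (ξ i ω)) ^ p)
        = (fun ω => if N ω = m then (1:ℝ) else 0)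
          * (fun ω => (∑ i ∈ range m, φ (ξ i ω)) ^ p) := by
      funext ω
      by_cases hω : N ω = m
      · rw [Set.indicator_of_mem (by exact hω)]; simp [hω]
      · rw [Set.indicator_of_notMem (by exact hω)]; simp [hω]
    have h3 : (fun ω => if N ω = m then (1:ℝ) else 0)
        = (A m).indicator (fun _ => (1:ℝ)) := by
      funext ω
      by_cases hω : N ω = m
      · rw [Set.indicator_of_mem (by exact hω)]; simp [hω]
      · rw [Set.indicator_of_notMem (by exact hω)]; simp [hω]
    rw [h1, ← integral_indicator (hAmeas m), h2,
      (hindR m).integral_mul_eq_mul_integral (hmNR m).aestronglyMeasurable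
        (hfm_meas m).aestronglyMeasurable]
    rw [h3, integral_indicator_const (1:ℝ) (hAmeas m), measureReal_def, hPA m,
      ENNReal.toReal_ofReal (hwnn m), smul_eq_mul, mul_one, hE]
  have hkey : ∫ ω, (∑ n ∈ range (N ω), φ (ξ n ω)) ^ p ∂P = ∑' m, w m * E m := by
    have h0 : ∫ ω, (∑ n ∈ range (N ω), φ (ξ n ω)) ^ p ∂P
        = ∫ ω in ⋃ m, A m, (∑ n ∈ range (N ω), φ (ξ n ω)) ^ p ∂P := by
      rw [hunion, setIntegral_univ]
    rw [h0, integral_iUnion hAmeas hdisj (hunion ▸ hfint.integrableOn)]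
    exact tsum_congr hEint
  have hswap : ∑' m, w m * E m
      = ∑ n ∈ Finset.Icc 1 p, (lam ^ n / n.factorial) * G n := by
    have h1 : (fun m => w m * E m)
        = fun m => ∑ n ∈ Finset.Icc 1 p, (w m * (m.choose n : ℝ)) * G n := by
      funext m
      rw [hEeq m, Finset.mul_sum]
      exact Finset.sum_congr rfl fun n _ => by ring
    rw [h1, Summable.tsum_finsetSum (fun n _ => (hsumE n).summable.mul_right (G n))]
    exact Finset.sum_congr rfl fun n _ => ((hsumE n).mul_right (G n)).tsum_eq
  rw [hkey, hswap]
  refine Finset.sum_congr rfl fun n hn => ?_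
  rw [hG, Finset.mul_sum]
  refine Finset.sum_congr rfl fun t ht => ?_
  have hnne : (n.factorial : ℝ) ≠ 0 := Nat.cast_ne_zero.2 n.factorial_ne_zero
  have hfne : (∏ i : Fin n, ((t i).factorial : ℝ)) ≠ 0 :=
    Finset.prod_ne_zero_iff.2 fun i _ => Nat.cast_ne_zero.2 (t i).factorial_ne_zero
  have hprod : ∏ i : Fin n, (lam * c (t i)) = lam ^ n * ∏ i : Fin n, c (t i) := by
    rw [Finset.prod_mul_distrib, Finset.prod_const, Finset.card_univ, Fintype.card_fin]
  show lam ^ n / n.factorial * (((p.factorial : ℝ) / ∏ i, ((t i).factorial : ℝ))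
      * ∏ i, c (t i))
    = ((p.factorial : ℝ) / ((n.factorial : ℝ) * ((∏ i, (t i).factorial : ℕ) : ℝ)))
      * ∏ i, (lam * c (t i))
  rw [hprod]
  push_cast
  field_simp
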